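/- Generating function for power sums (§5–§6): Let R be a commutative ring and let s be a multiset of elements of R. In the formal power series ring R[[T]], set Q = ∏_{α ∈ s} (1 - (C α)·T). Then -Q' = Q · (Σ_{k ≥ 0} p_{k+1}(s) · T^k), where Q' is the formal derivative of Q and the right-hand factor is the power series whose k-th coefficient is the (k+1)-st power sum p_{k+1}(s). (This is Euler's identity dZ/(Z dx) = n/x + ∫α/x² + ∫α²/x³ + ∫α³/x⁴ + ..., obtained by expanding each 1/(x-α) as a geometric series, rewritten in the variable T = 1/x.) -/

import Mathlib

open PowerSeries

/-- The `k`-th power sum of a multiset `s`: the sum of the `k`-th powers of its elements. -/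
def Multiset.psum {R : Type*} [CommRing R] (s : Multiset R) (k : ℕ) : R :=
  (s.map (· ^ k)).sum

lemma geom_aux {R : Type*} [CommRing R] (a : R) :
    (1 - PowerSeries.C a * PowerSeries.X) * PowerSeries.mk (fun k => a ^ k) = 1 := by
  ext n
  rw [sub_mul, one_mul, map_sub, mul_assoc]
  cases n with
  | zero => simp
  | succ n =>
      simp [PowerSeries.coeff_succ_mul_X, PowerSeries.coeff_C_mul, pow_succ, mul_comm]

/-- Generating function for power sums (§5–§6): with `Q = ∏_{α ∈ s} (1 - (C α)·T)` in `R⟦T⟧`,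
we have `-Q' = Q · (Σ_{k ≥ 0} p_{k+1}(s) · T^k)`. -/
theorem neg_derivative_eq_mul_powerSum_series {R : Type*} [CommRing R] (s : Multiset R)
    (Q : PowerSeries R)
    (hQ : Q = (s.map (fun a => 1 - PowerSeries.C a * PowerSeries.X)).prod) :
    -(PowerSeries.derivative R Q) = Q * PowerSeries.mk (fun k => s.psum (k + 1)) := by
  subst hQ
  induction s using Multiset.induction_on with
  | empty =>
      have : PowerSeries.mk (fun k => (0 : Multiset R).psum (k + 1)) = 0 := by
        ext n; simp [Multiset.psum]
      simp [this]
  | cons a t ih =>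
      have hmk : PowerSeries.mk (fun k => (a ::ₘ t).psum (k + 1)) =
          PowerSeries.C a * PowerSeries.mk (fun k => a ^ k) +
            PowerSeries.mk (fun k => t.psum (k + 1)) := by
        ext n
        simp [Multiset.psum, pow_succ, mul_comm]
      rw [Multiset.map_cons, Multiset.prod_cons, hmk]
      rw [Derivation.leibniz, smul_eq_mul, smul_eq_mul]
      have hder : PowerSeries.derivative R (1 - PowerSeries.C a * PowerSeries.X)
          = -PowerSeries.C a := by
        simp
      rw [hder]
      linear_combination (1 - PowerSeries.C a * PowerSeries.X) * ih -
        PowerSeries.C a * (Multiset.map (fun a => 1 - PowerSeries.C a * PowerSeries.X) t).prod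
          * geom_aux a
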